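/- The serial dictatorship rule satisfies monotonic discoverability: for any allocation μ and any preference profile P, either SD(P) = μ or there exists an agent a* such that for every continuation profile P' of P at μ, SD_{a*}(P') ≠ μ(a*). -/
import Mathlib


variable {O : Type*} [Fintype O] [DecidableEq O]

/-- Available objects when it is agent `k`'s turn in the serial dictatorship with
priority order `a_0, a_1, …`: each agent in turn takes her most-preferred available
object; the null object is never removed (it has unlimited copies).
(Larger in the linear order means more preferred.) -/
def availSD (nullObj : O) {n : ℕ} (P : Fin n → LinearOrder O) :
    ℕ → {s : Finset O // s.Nonempty}
  | 0 => ⟨Finset.univ, ⟨nullObj, Finset.mem_univ _⟩⟩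
  | k + 1 =>
    let s := availSD nullObj P k
    if h : k < n then
      ⟨insert nullObj (s.1.erase (@Finset.max' O (P ⟨k, h⟩) s.1 s.2)),
        Finset.insert_nonempty _ _⟩
    else s

/-- The serial dictatorship rule: agent `a` receives her most-preferred object
among those still available at her turn. -/
def SD (nullObj : O) {n : ℕ} (P : Fin n → LinearOrder O) (a : Fin n) : O :=
  @Finset.max' O (P a) (availSD nullObj P a.1).1 (availSD nullObj P a.1).2

/-- `P'` is a continuation profile of `P` at allocation `μ` (i.e. `P' ∈ L(P, μ)`). -/
def InLowerContour {A O : Type*} (P : A → LinearOrder O) (μ : A → O)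
    (P' : A → LinearOrder O) : Prop :=
  ∀ a : A, ∀ o o' : O, (P a).le (μ a) o → ((P a).lt o' o ↔ (P' a).lt o' o)

/-- Monotonic discoverability of a rule. -/
def MonotonicDiscoverability {A O : Type*} (φ : (A → LinearOrder O) → A → O) : Prop :=
  ∀ (μ : A → O) (P : A → LinearOrder O),
    φ P = μ ∨ ∃ a : A, ∀ P' : A → LinearOrder O, InLowerContour P μ P' → φ P' a ≠ μ a

lemma availSD_succ (nullObj : O) {n : ℕ} (P : Fin n → LinearOrder O) (k : ℕ) (h : k < n) :
    availSD nullObj P (k+1) =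
      ⟨insert nullObj ((availSD nullObj P k).1.erase (SD nullObj P ⟨k, h⟩)),
        Finset.insert_nonempty _ _⟩ := by
  simp only [availSD, SD, dif_pos h]

lemma sd_md_aux (nullObj : O) (n : ℕ) :
    ∀ (μ : Fin n → O) (P : Fin n → LinearOrder O),
      SD nullObj P = μ ∨ ∃ a : Fin n, ∀ P' : Fin n → LinearOrder O,
        (∀ a : Fin n, ∀ o o' : O, (P a).le (μ a) o → ((P a).lt o' o ↔ (P' a).lt o' o)) →
        SD nullObj P' a ≠ μ a := by
  classical
  intro μ P
  by_cases hEq : SD nullObj P = μ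
  · exact Or.inl hEq
  right
  have hex : ∃ a : Fin n, SD nullObj P a ≠ μ a := by
    by_contra h
    push_neg at h
    exact hEq (funext h)
  obtain ⟨a, ha⟩ := hex
  let q : ℕ → Prop := fun k => ∃ h : k < n, SD nullObj P ⟨k, h⟩ ≠ μ ⟨k, h⟩
  have hq : ∃ k, q k := ⟨a.1, a.2, by simpa using ha⟩
  obtain ⟨hk0n, hk0⟩ := Nat.find_spec hq
  set k0 := Nat.find hq with hk0def
  have hmin : ∀ (j : ℕ) (hj : j < n), j < k0 → SD nullObj P ⟨j, hj⟩ = μ ⟨j, hj⟩ := by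
    intro j hj hlt
    by_contra h
    exact (Nat.find_min hq hlt) ⟨hj, h⟩
  refine ⟨⟨k0, hk0n⟩, ?_⟩
  intro P' hP'
  have hav : ∀ k, k ≤ k0 → availSD nullObj P' k = availSD nullObj P k := by
    intro k hk
    induction k with
    | zero => rfl
    | succ k ih =>
      have hk' : k ≤ k0 := Nat.le_of_succ_le hk
      have ihk := ih hk'
      have hkn : k < n := lt_of_lt_of_le (Nat.lt_of_succ_le hk) (le_of_lt hk0n)
      have hμ : SD nullObj P ⟨k, hkn⟩ = μ ⟨k, hkn⟩ :=
        hmin k hkn (Nat.lt_of_succ_le hk)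
      -- the P'-maximum of the (common) available set equals the P-maximum
      have hmaxP' : SD nullObj P' ⟨k, hkn⟩ = SD nullObj P ⟨k, hkn⟩ := by
        set s := availSD nullObj P k with hs
        have hub : ∀ y ∈ s.1, (P' ⟨k, hkn⟩).le y (SD nullObj P ⟨k, hkn⟩) := by
          intro y hy
          have h1 : (P ⟨k, hkn⟩).le y (SD nullObj P ⟨k, hkn⟩) :=
            @Finset.le_max' O (P ⟨k, hkn⟩) s.1 y hy
          rcases eq_or_ne y (SD nullObj P ⟨k, hkn⟩) with h2 | h2
          · exact h2 ▸ (P' ⟨k, hkn⟩).le_refl y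
          · have hlt : (P ⟨k, hkn⟩).lt y (μ ⟨k, hkn⟩) := by
              rw [← hμ]
              exact @lt_of_le_of_ne O (P ⟨k, hkn⟩).toPartialOrder _ _ h1 h2
            have := (hP' ⟨k, hkn⟩ (μ ⟨k, hkn⟩) y ((P ⟨k, hkn⟩).le_refl _)).mp hlt
            rw [hμ]
            exact @le_of_lt O (P' ⟨k, hkn⟩).toPreorder _ _ this
        have hmem : SD nullObj P ⟨k, hkn⟩ ∈ s.1 :=
          @Finset.max'_mem O (P ⟨k, hkn⟩) s.1 s.2
        have hmem' : SD nullObj P ⟨k, hkn⟩ ∈ (availSD nullObj P' k).1 := by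
          rw [ihk]; exact hmem
        refine (P' ⟨k, hkn⟩).le_antisymm _ _ ?_ ?_
        · have := @Finset.max'_le O (P' ⟨k, hkn⟩) (availSD nullObj P' k).1
            (availSD nullObj P' k).2 (SD nullObj P ⟨k, hkn⟩)
            (by rw [ihk]; exact hub)
          exact this
        · exact @Finset.le_max' O (P' ⟨k, hkn⟩) (availSD nullObj P' k).1 _ hmem'
      rw [availSD_succ nullObj P' k hkn, availSD_succ nullObj P k hkn]
      apply Subtype.ext
      simp only
      rw [ihk, hmaxP']
  -- final step
  have havk0 := hav k0 le_rfl
  intro hcon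
  set s := availSD nullObj P k0 with hs
  have hmemx : SD nullObj P ⟨k0, hk0n⟩ ∈ s.1 :=
    @Finset.max'_mem O (P ⟨k0, hk0n⟩) s.1 s.2
  have hset : (availSD nullObj P' k0).1 = s.1 := congrArg Subtype.val havk0
  have hmemx' : SD nullObj P' ⟨k0, hk0n⟩ ∈ s.1 := by
    have h : SD nullObj P' ⟨k0, hk0n⟩ ∈ (availSD nullObj P' k0).1 :=
      @Finset.max'_mem O (P' ⟨k0, hk0n⟩) (availSD nullObj P' k0).1
        (availSD nullObj P' k0).2
    rwa [hset] at h
  by_cases hμmem : μ ⟨k0, hk0n⟩ ∈ s.1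
  · -- μ is available; SD(P) chose x ≠ μ, so μ <_P x, hence μ <_{P'} x,
    -- but SD(P') = μ means x ≤_{P'} μ, contradiction.
    have hle : (P ⟨k0, hk0n⟩).le (μ ⟨k0, hk0n⟩) (SD nullObj P ⟨k0, hk0n⟩) :=
      @Finset.le_max' O (P ⟨k0, hk0n⟩) s.1 _ hμmem
    have hne : SD nullObj P ⟨k0, hk0n⟩ ≠ μ ⟨k0, hk0n⟩ := hk0
    have hltP : (P ⟨k0, hk0n⟩).lt (μ ⟨k0, hk0n⟩) (SD nullObj P ⟨k0, hk0n⟩) :=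
      @lt_of_le_of_ne O (P ⟨k0, hk0n⟩).toPartialOrder _ _ hle (Ne.symm hne)
    have hltP' : (P' ⟨k0, hk0n⟩).lt (μ ⟨k0, hk0n⟩) (SD nullObj P ⟨k0, hk0n⟩) :=
      (hP' ⟨k0, hk0n⟩ (SD nullObj P ⟨k0, hk0n⟩) (μ ⟨k0, hk0n⟩) hle).mp hltP
    have hle' : (P' ⟨k0, hk0n⟩).le (SD nullObj P ⟨k0, hk0n⟩) (SD nullObj P' ⟨k0, hk0n⟩) := by
      have := @Finset.le_max' O (P' ⟨k0, hk0n⟩) (availSD nullObj P' k0).1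
        (SD nullObj P ⟨k0, hk0n⟩) (by rw [havk0]; exact hmemx)
      exact this
    rw [hcon] at hle'
    exact absurd (@lt_of_lt_of_le O (P' ⟨k0, hk0n⟩).toPreorder _ _ _ hltP' hle')
      (@lt_irrefl O (P' ⟨k0, hk0n⟩).toPreorder _)
  · exact hμmem (hcon ▸ hmemx')

/-- The serial dictatorship rule satisfies monotonic discoverability. -/
theorem sd_monotonicDiscoverability (nullObj : O) (n : ℕ) (hn : n ≤ Fintype.card O) :
    MonotonicDiscoverability (fun (P : Fin n → LinearOrder O) => SD nullObj P) := by
  intro μ P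
  exact sd_md_aux nullObj n μ P
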